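/- Let (f_n) and (g_n) be (p,q)-Appell polynomial sequences with coefficient sequences (a_k) and (b_k), i.e. f_n(x) = ∑_{k=0}^{n} [n choose k]_{p,q} p^{(n−k)(n−k−1)/2} a_k x^{n−k} with a_0 ≠ 0 and g_n(x) = ∑_{k=0}^{n} [n choose k]_{p,q} p^{(n−k)(n−k−1)/2} b_k x^{n−k} with b_0 ≠ 0. Then the product sequence (f∗g)_n(x) := ∑_{k=0}^{n} [n choose k]_{p,q} a_{n−k} g_k(x) satisfies (f∗g)_n(x) = ∑_{k=0}^{n} [n choose k]_{p,q} p^{(n−k)(n−k−1)/2} c_k x^{n−k}, where c_n = ∑_{j=0}^{n} [n choose j]_{p,q} a_j b_{n−j}; in particular (f∗g)_n is a (p,q)-Appell polynomial sequence (its determining coefficients are the (p,q)-binomial convolution of those of f and g). -/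

import Mathlib

noncomputable section
open Finset Polynomial

/-- The (p,q)-number `[n]_{p,q} = (p^n - q^n)/(p - q)`. -/
def pqNum (p q : ℝ) (n : ℕ) : ℝ := (p ^ n - q ^ n) / (p - q)

/-- The (p,q)-factorial `[n]_{p,q}! = ∏_{k=1}^n [k]_{p,q}`. -/
def pqFact (p q : ℝ) (n : ℕ) : ℝ := ∏ k ∈ Finset.Icc 1 n, pqNum p q k

/-- The (p,q)-binomial coefficient. -/
def pqBinom (p q : ℝ) (n k : ℕ) : ℝ := pqFact p q n / (pqFact p q k * pqFact p q (n - k))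

/-- The (p,q)-derivative on polynomials: the linear operator with `D(X^n) = [n]_{p,q} X^(n-1)`. -/
def pqDeriv (p q : ℝ) (f : Polynomial ℝ) : Polynomial ℝ :=
  f.sum fun n a => Polynomial.C (a * pqNum p q n) * Polynomial.X ^ (n - 1)

/-- The (p,q)-derivative on formal power series, acting coefficientwise by
`D(X^n) = [n]_{p,q} X^(n-1)`. -/
def pqDerivPS (p q : ℝ) (f : PowerSeries ℝ) : PowerSeries ℝ :=
  PowerSeries.mk fun n => pqNum p q (n + 1) * PowerSeries.coeff (n + 1) f

/-- The double (p,q)-factorial `[2m]_{p,q}!! = ∏_{k=1}^m [2k]_{p,q}`. -/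
def pqDoubleFact (p q : ℝ) (m : ℕ) : ℝ := ∏ k ∈ Finset.Icc 1 m, pqNum p q (2 * k)

/-- A sequence of real polynomials of exact degree `n` is (p,q)-Appell when
`D_{p,q} f_{n+1}(x) = [n+1]_{p,q} f_n(p x)` for all `n ≥ 0` and all `x`. -/
def IsPQAppell (p q : ℝ) (f : ℕ → Polynomial ℝ) : Prop :=
  (∀ n, (f n).natDegree = n) ∧
    ∀ (n : ℕ) (x : ℝ), (pqDeriv p q (f (n + 1))).eval x = pqNum p q (n + 1) * (f n).eval (p * x)


lemma pqFact_pos (p q : ℝ) (hq : 0 < q) (hpq : q < p) (n : ℕ) : 0 < pqFact p q n := by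
  apply Finset.prod_pos
  intro k hk
  have hk1 : 1 ≤ k := (Finset.mem_Icc.mp hk).1
  unfold pqNum
  apply div_pos _ (by linarith)
  have : q ^ k < p ^ k := pow_lt_pow_left₀ hpq hq.le (by omega)
  linarith

lemma pq_trinom (p q : ℝ) (hq : 0 < q) (hpq : q < p) {j k n : ℕ} (hjk : j ≤ k) (hkn : k ≤ n) :
    pqBinom p q n k * pqBinom p q k j =
      pqFact p q n / (pqFact p q j * pqFact p q (k - j) * pqFact p q (n - k)) := by
  unfold pqBinom
  have h1 := (pqFact_pos p q hq hpq k).ne'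
  have h2 := (pqFact_pos p q hq hpq j).ne'
  have h3 := (pqFact_pos p q hq hpq (k - j)).ne'
  have h4 := (pqFact_pos p q hq hpq (n - k)).ne'
  field_simp

/-- the *-product of two (p,q)-Appell sequences is the (p,q)-Appell sequence
whose coefficients are the (p,q)-binomial convolution of the original coefficient sequences. -/
theorem pq_appell_star_product (p q : ℝ) (hq : 0 < q) (hpq : q < p)
    (a b : ℕ → ℝ) (ha : a 0 ≠ 0) (hb : b 0 ≠ 0)
    (f g : ℕ → ℝ → ℝ)
    (hf : ∀ (n : ℕ) (x : ℝ), f n x = ∑ k ∈ Finset.range (n + 1),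
      pqBinom p q n k * p ^ ((n - k) * (n - k - 1) / 2) * a k * x ^ (n - k))
    (hg : ∀ (n : ℕ) (x : ℝ), g n x = ∑ k ∈ Finset.range (n + 1),
      pqBinom p q n k * p ^ ((n - k) * (n - k - 1) / 2) * b k * x ^ (n - k)) :
    ∀ (n : ℕ) (x : ℝ),
      (∑ k ∈ Finset.range (n + 1), pqBinom p q n k * a (n - k) * g k x)
        = ∑ k ∈ Finset.range (n + 1),
            pqBinom p q n k * p ^ ((n - k) * (n - k - 1) / 2) *
              (∑ j ∈ Finset.range (k + 1), pqBinom p q k j * a j * b (k - j)) * x ^ (n - k) := by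
  intro n x
  simp only [hg, Finset.mul_sum, Finset.sum_mul]
  rw [Finset.sum_sigma', Finset.sum_sigma']
  refine Finset.sum_nbij' (fun s => ⟨n - s.1 + s.2, n - s.1⟩) (fun s => ⟨n - s.2, s.1 - s.2⟩)
    ?_ ?_ ?_ ?_ ?_
  · rintro ⟨k, j⟩ hs
    simp only [Finset.mem_sigma, Finset.mem_range] at hs ⊢
    omega
  · rintro ⟨k, j⟩ hs
    simp only [Finset.mem_sigma, Finset.mem_range] at hs ⊢
    omega
  · rintro ⟨k, j⟩ hs
    simp only [Finset.mem_sigma, Finset.mem_range] at hs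
    simp only [Sigma.mk.inj_iff]
    constructor <;> first | omega | (apply heq_of_eq; omega)
  · rintro ⟨k, j⟩ hs
    simp only [Finset.mem_sigma, Finset.mem_range] at hs
    simp only [Sigma.mk.inj_iff]
    constructor <;> first | omega | (apply heq_of_eq; omega)
  · rintro ⟨k, j⟩ hs
    simp only [Finset.mem_sigma, Finset.mem_range] at hs
    have hjk : j ≤ k := by omega
    have hkn : k ≤ n := by omega
    have e1 : n - (n - k + j) = k - j := by omega
    have e2 : n - k + j - (n - k) = j := by omega
    simp only [e1, e2]
    have t1 := pq_trinom p q hq hpq hjk hkn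
    have t2 := pq_trinom p q hq hpq (show n - k ≤ n - k + j by omega)
      (show n - k + j ≤ n by omega)
    rw [e2, e1] at t2
    have key : pqBinom p q n k * pqBinom p q k j
        = pqBinom p q n (n - k + j) * pqBinom p q (n - k + j) (n - k) := by
      rw [t1, t2]; ring
    calc pqBinom p q n k * a (n - k) *
          (pqBinom p q k j * p ^ ((k - j) * (k - j - 1) / 2) * b j * x ^ (k - j))
        = pqBinom p q n k * pqBinom p q k j *
          (a (n - k) * p ^ ((k - j) * (k - j - 1) / 2) * b j * x ^ (k - j)) := by ring
      _ = pqBinom p q n (n - k + j) * pqBinom p q (n - k + j) (n - k) *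
          (a (n - k) * p ^ ((k - j) * (k - j - 1) / 2) * b j * x ^ (k - j)) := by rw [key]
      _ = _ := by ring
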